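/- Let C > 0 and let G be an n-vertex graph containing at least 3C·n^{t+1}·p^t copies of the star S_t. Then there exist a nonempty collection H of copies of S_t in G and vertex sets L1, L2 such that: (1) every star in H has its center in L1 and all its leaves in L2, and |H| ≥ C·n^{t+1}·p^t; (2) every vertex of L1 is the center of at least C·n^t·p^t stars in H; and (3) every vertex of L2 is a leaf of at least C·n^t·p^t stars in H. -/
import Mathlib


open Finset

private def ccount {V : Type*} [Fintype V] [DecidableEq V] (S : Finset (V × Finset V)) : ℕ :=
  (univ.filter (fun v => (S.filter (fun q => q.1 = v)).Nonempty)).card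

private def lcount {V : Type*} [Fintype V] [DecidableEq V] (S : Finset (V × Finset V)) : ℕ :=
  (univ.filter (fun u => (S.filter (fun q => u ∈ q.2)).Nonempty)).card

private lemma prune_aux {V : Type*} [Fintype V] [DecidableEq V] (D : ℝ)
    (S : Finset (V × Finset V)) :
    ∃ H ⊆ S,
      ((S.card : ℝ) - D * (((ccount S + lcount S : ℕ) : ℝ) - ((ccount H + lcount H : ℕ) : ℝ))
          ≤ H.card) ∧
      (∀ v, ((H.filter (fun q => q.1 = v)).Nonempty → D ≤ (H.filter (fun q => q.1 = v)).card)) ∧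
      (∀ u, ((H.filter (fun q => u ∈ q.2)).Nonempty → D ≤ (H.filter (fun q => u ∈ q.2)).card)) := by
  classical
  induction S using Finset.strongInduction with
  | _ S ih =>
    by_cases hc : ∃ v : V, (S.filter (fun q => q.1 = v)).Nonempty ∧
        ((S.filter (fun q => q.1 = v)).card : ℝ) < D
    · obtain ⟨v, hne, hlt⟩ := hc
      set S' := S.filter (fun q => ¬ q.1 = v) with hS'
      obtain ⟨q0, hq0⟩ := hne
      have hq0S : q0 ∈ S := (mem_filter.mp hq0).1
      have hq0v : q0.1 = v := (mem_filter.mp hq0).2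
      have hss : S' ⊂ S := Finset.filter_ssubset.mpr ⟨q0, hq0S, by simp [hq0v]⟩
      obtain ⟨H, hHS', h1, h2, h3⟩ := ih S' hss
      have hcard : (S.filter (fun q => q.1 = v)).card + S'.card = S.card :=
        Finset.card_filter_add_card_filter_not _
      have hcc : ccount S' + 1 ≤ ccount S := by
        have hvB : v ∈ univ.filter (fun w => (S.filter (fun q => q.1 = w)).Nonempty) := by
          simp only [mem_filter, mem_univ, true_and]
          exact ⟨q0, hq0⟩
        have hsub : (univ.filter (fun w => (S'.filter (fun q => q.1 = w)).Nonempty)) ⊆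
            (univ.filter (fun w => (S.filter (fun q => q.1 = w)).Nonempty)).erase v := by
          intro w hw
          simp only [mem_filter, mem_univ, true_and] at hw
          obtain ⟨q, hq⟩ := hw
          have hqS' : q ∈ S' := (mem_filter.mp hq).1
          have hqw : q.1 = w := (mem_filter.mp hq).2
          have hqS : q ∈ S := (mem_filter.mp hqS').1
          have hqv : ¬ q.1 = v := (mem_filter.mp hqS').2
          refine Finset.mem_erase.mpr ⟨?_, ?_⟩
          · rintro rfl; exact hqv hqw
          · simp only [mem_filter, mem_univ, true_and]
            exact ⟨q, mem_filter.mpr ⟨hqS, hqw⟩⟩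
        have h4 := Finset.card_le_card hsub
        rw [Finset.card_erase_of_mem hvB] at h4
        have hpos : 1 ≤ (univ.filter (fun w => (S.filter (fun q => q.1 = w)).Nonempty)).card :=
          Finset.card_pos.mpr ⟨v, hvB⟩
        unfold ccount
        omega
      have hlc : lcount S' ≤ lcount S := by
        apply Finset.card_le_card
        intro w hw
        simp only [mem_filter, mem_univ, true_and] at hw ⊢
        obtain ⟨q, hq⟩ := hw
        exact ⟨q, mem_filter.mpr ⟨(mem_filter.mp (mem_filter.mp hq).1).1, (mem_filter.mp hq).2⟩⟩
      refine ⟨H, hHS'.trans (Finset.filter_subset _ _), ?_, h2, h3⟩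
      have hD0 : 0 < D := lt_of_le_of_lt (by positivity) hlt
      have hcnat : ccount S' + lcount S' + 1 ≤ ccount S + lcount S := by omega
      have hcount : ((ccount S' + lcount S' : ℕ) : ℝ) + 1 ≤ ((ccount S + lcount S : ℕ) : ℝ) := by
        exact_mod_cast hcnat
      have hScard : (S.card : ℝ) = (S.filter (fun q => q.1 = v)).card + S'.card := by
        exact_mod_cast hcard.symm
      nlinarith [h1, hD0.le, hcount, hlt, hScard]
    · by_cases hl : ∃ u : V, (S.filter (fun q => u ∈ q.2)).Nonempty ∧
          ((S.filter (fun q => u ∈ q.2)).card : ℝ) < D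
      · obtain ⟨u, hne, hlt⟩ := hl
        set S' := S.filter (fun q => ¬ u ∈ q.2) with hS'
        obtain ⟨q0, hq0⟩ := hne
        have hq0S : q0 ∈ S := (mem_filter.mp hq0).1
        have hq0u : u ∈ q0.2 := (mem_filter.mp hq0).2
        have hss : S' ⊂ S := Finset.filter_ssubset.mpr ⟨q0, hq0S, by simp [hq0u]⟩
        obtain ⟨H, hHS', h1, h2, h3⟩ := ih S' hss
        have hcard : (S.filter (fun q => u ∈ q.2)).card + S'.card = S.card :=
          Finset.card_filter_add_card_filter_not _
        have hlc : lcount S' + 1 ≤ lcount S := by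
          have huB : u ∈ univ.filter (fun w => (S.filter (fun q => w ∈ q.2)).Nonempty) := by
            simp only [mem_filter, mem_univ, true_and]
            exact ⟨q0, hq0⟩
          have hsub : (univ.filter (fun w => (S'.filter (fun q => w ∈ q.2)).Nonempty)) ⊆
              (univ.filter (fun w => (S.filter (fun q => w ∈ q.2)).Nonempty)).erase u := by
            intro w hw
            simp only [mem_filter, mem_univ, true_and] at hw
            obtain ⟨q, hq⟩ := hw
            have hqS' : q ∈ S' := (mem_filter.mp hq).1
            have hqw : w ∈ q.2 := (mem_filter.mp hq).2
            have hqS : q ∈ S := (mem_filter.mp hqS').1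
            have hqu : ¬ u ∈ q.2 := (mem_filter.mp hqS').2
            refine Finset.mem_erase.mpr ⟨?_, ?_⟩
            · rintro rfl; exact hqu hqw
            · simp only [mem_filter, mem_univ, true_and]
              exact ⟨q, mem_filter.mpr ⟨hqS, hqw⟩⟩
          have h4 := Finset.card_le_card hsub
          rw [Finset.card_erase_of_mem huB] at h4
          have hpos : 1 ≤ (univ.filter (fun w => (S.filter (fun q => w ∈ q.2)).Nonempty)).card :=
            Finset.card_pos.mpr ⟨u, huB⟩
          unfold lcount
          omega
        have hcc : ccount S' ≤ ccount S := by
          apply Finset.card_le_card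
          intro w hw
          simp only [mem_filter, mem_univ, true_and] at hw ⊢
          obtain ⟨q, hq⟩ := hw
          exact ⟨q, mem_filter.mpr ⟨(mem_filter.mp (mem_filter.mp hq).1).1, (mem_filter.mp hq).2⟩⟩
        refine ⟨H, hHS'.trans (Finset.filter_subset _ _), ?_, h2, h3⟩
        have hD0 : 0 < D := lt_of_le_of_lt (by positivity) hlt
        have hcnat : ccount S' + lcount S' + 1 ≤ ccount S + lcount S := by omega
        have hcount : ((ccount S' + lcount S' : ℕ) : ℝ) + 1 ≤ ((ccount S + lcount S : ℕ) : ℝ) := by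
          exact_mod_cast hcnat
        have hScard : (S.card : ℝ) = (S.filter (fun q => u ∈ q.2)).card + S'.card := by
          exact_mod_cast hcard.symm
        nlinarith [h1, hD0.le, hcount, hlt, hScard]
      · push_neg at hc hl
        exact ⟨S, Finset.Subset.refl S, by simp, fun v hv => hc v hv, fun u hu => hl u hu⟩

/-- Pruning lemma for stars: a graph on `n ≥ 1` vertices with at least `3C·n^{t+1}·p^t`
copies of the star `S_t` contains a nonempty collection `H` of copies of `S_t`, with all
centers in `L1` and all leaves in `L2`, such that `|H| ≥ C·n^{t+1}·p^t`, every vertex of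
`L1` is the center of at least `C·n^t·p^t` stars of `H`, and every vertex of `L2` is a
leaf of at least `C·n^t·p^t` stars of `H`. -/
theorem star_pruning {V : Type*} [Fintype V] [DecidableEq V]
    (G : SimpleGraph V) [DecidableRel G.Adj] (t : ℕ) (ht : 1 ≤ t)
    (hn : 0 < Fintype.card V)
    (p C : ℝ) (hp : 0 < p) (hC : 0 < C)
    (copies : Finset (V × Finset V))
    (hcopies : copies = ((Finset.univ : Finset V) ×ˢ (Finset.univ : Finset (Finset V))).filter
      (fun q : V × Finset V => q.2 ⊆ G.neighborFinset q.1 ∧ q.2.card = t))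
    (hmany : 3 * C * (Fintype.card V : ℝ) ^ (t + 1) * p ^ t ≤ copies.card) :
    ∃ H ⊆ copies, ∃ L1 L2 : Finset V,
      H.Nonempty ∧
      (∀ q ∈ H, q.1 ∈ L1 ∧ q.2 ⊆ L2) ∧
      C * (Fintype.card V : ℝ) ^ (t + 1) * p ^ t ≤ H.card ∧
      (∀ v ∈ L1, C * (Fintype.card V : ℝ) ^ t * p ^ t ≤ (H.filter (fun q => q.1 = v)).card) ∧
      (∀ u ∈ L2, C * (Fintype.card V : ℝ) ^ t * p ^ t ≤ (H.filter (fun q => u ∈ q.2)).card) := by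
  classical
  set n : ℕ := Fintype.card V with hnn
  set D : ℝ := C * (n : ℝ) ^ t * p ^ t with hD
  have hD0 : 0 < D := by positivity
  obtain ⟨H, hHc, h1, h2, h3⟩ := prune_aux D copies
  have hccb : ccount copies ≤ n := by
    unfold ccount; exact le_trans (Finset.card_filter_le _ _) (le_of_eq (Finset.card_univ))
  have hlcb : lcount copies ≤ n := by
    unfold lcount; exact le_trans (Finset.card_filter_le _ _) (le_of_eq (Finset.card_univ))
  have hHbig : C * (n : ℝ) ^ (t + 1) * p ^ t ≤ H.card := by
    have hcb : ((ccount copies + lcount copies : ℕ) : ℝ) ≤ 2 * n := by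
      have : ccount copies + lcount copies ≤ 2 * n := by omega
      exact_mod_cast this
    have hcH : (0:ℝ) ≤ ((ccount H + lcount H : ℕ) : ℝ) := Nat.cast_nonneg _
    have hpow : ((n : ℝ)) ^ (t + 1) = (n : ℝ) ^ t * n := pow_succ _ _
    have key : D * (((ccount copies + lcount copies : ℕ) : ℝ) - ((ccount H + lcount H : ℕ) : ℝ))
        ≤ D * (2 * n) :=
      mul_le_mul_of_nonneg_left (by linarith) hD0.le
    have e : D * (2 * (n : ℝ)) = 2 * (C * (n : ℝ) ^ (t + 1) * p ^ t) := by
      rw [hpow, hD]; ring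
    linarith [h1, hmany, key]
  have hHpos : (0:ℝ) < H.card := lt_of_lt_of_le (by positivity) hHbig
  have hHne : H.Nonempty := by
    rw [← Finset.card_pos]
    exact_mod_cast hHpos
  refine ⟨H, hHc, H.image Prod.fst, H.biUnion Prod.snd, hHne, ?_, hHbig, ?_, ?_⟩
  · intro q hq
    exact ⟨Finset.mem_image_of_mem _ hq, fun x hx => Finset.mem_biUnion.mpr ⟨q, hq, hx⟩⟩
  · intro v hv
    obtain ⟨q, hq, hqv⟩ := Finset.mem_image.mp hv
    exact h2 v ⟨q, mem_filter.mpr ⟨hq, hqv⟩⟩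
  · intro u hu
    obtain ⟨q, hq, hqu⟩ := Finset.mem_biUnion.mp hu
    exact h3 u ⟨q, mem_filter.mpr ⟨hq, hqu⟩⟩
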